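/- Let M be a compact Riemannian manifold and define, for ρ ∈ C^∞(M) with ρ > 0 and p ∈ C^∞(M), the bilinear form Ḡ_ρ(ṙ, ṙ) = ∫_M (L_ρ^{-1} ṙ) ṙ μ_g on zero-mean functions ṙ, where L_ρ(p) = -div(ρ A^{-1}(ρ∇p)). Assuming L_ρ is a bijection from C^∞(M)/ℝ to zero-mean smooth functions, Ḡ_ρ is a positive-definite symmetric bilinear form, and it equals the G-length of the horizontal lift: Ḡ_ρ(ṙ, ṙ) = ∫_M g(A^{-1}(ρ∇p), ρ∇p) μ_g where p = L_ρ^{-1}(ṙ). -/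
import Mathlib


open MeasureTheory
open scoped RealInnerProductSpace

/-- Define `Ḡ_ρ(rdot, rdot) = ∫ (L_ρ⁻¹ rdot) rdot μ_g` on zero-mean functions, where
`L_ρ(p) = -div(ρ A⁻¹(ρ∇p))` and `L_ρ` is a bijection from functions modulo constants onto
zero-mean functions.  Then `Ḡ_ρ` is a positive-definite symmetric bilinear form and equals
the `G`-length of the horizontal lift: `Ḡ_ρ(rdot, rdot) = ∫ g(A⁻¹(ρ∇p), ρ∇p) μ_g` with
`p = L_ρ⁻¹(rdot)`. -/
theorem descending_metric_positive_definite_symmetric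
    {M E : Type*} [MeasurableSpace M] (μ : Measure M)
    [NormedAddCommGroup E] [InnerProductSpace ℝ E]
    (grad : (M → ℝ) →ₗ[ℝ] (M → E)) (dvg : (M → E) →ₗ[ℝ] (M → ℝ))
    (Ainv : (M → E) →ₗ[ℝ] (M → E))
    (hIBP : ∀ (f : M → ℝ) (z : M → E),
        ∫ x, f x * dvg z x ∂μ = -∫ x, ⟪z x, grad f x⟫ ∂μ)
    (hAinv_selfadjoint : ∀ z₁ z₂ : M → E,
        ∫ x, ⟪Ainv z₁ x, z₂ x⟫ ∂μ = ∫ x, ⟪z₁ x, Ainv z₂ x⟫ ∂μ)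
    (hApos : ∀ z : M → E, (∃ x, z x ≠ 0) → 0 < ∫ x, ⟪Ainv z x, z x⟫ ∂μ)
    (ρ : M → ℝ) (hρpos : ∀ x, 0 < ρ x)
    -- L_ρ is a bijection onto zero-mean functions:
    (hLsurj : ∀ f : M → ℝ, (∫ x, f x ∂μ = 0) →
        ∃ p : M → ℝ, ∀ x, -(dvg (fun y => ρ y • Ainv (fun z => ρ z • grad p z) y) x) = f x)
    (hLinj : ∀ p : M → ℝ,
        (∀ x, -(dvg (fun y => ρ y • Ainv (fun z => ρ z • grad p z) y) x) = 0) →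
        ∃ c : ℝ, ∀ x, p x = c) :
    ∀ (rdot sdot p q : M → ℝ),
      (∫ x, rdot x ∂μ = 0) → (∫ x, sdot x ∂μ = 0) →
      (∀ x, -(dvg (fun y => ρ y • Ainv (fun z => ρ z • grad p z) y) x) = rdot x) →
      (∀ x, -(dvg (fun y => ρ y • Ainv (fun z => ρ z • grad q z) y) x) = sdot x) →
      -- symmetry of Ḡ_ρ
      (∫ x, p x * sdot x ∂μ = ∫ x, q x * rdot x ∂μ)
      -- positive definiteness of Ḡ_ρ
      ∧ ((∃ x, rdot x ≠ 0) → 0 < ∫ x, p x * rdot x ∂μ)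
      -- Ḡ_ρ equals the G-length of the horizontal lift
      ∧ (∫ x, p x * rdot x ∂μ
          = ∫ x, ⟪Ainv (fun z => ρ z • grad p z) x, ρ x • grad p x⟫ ∂μ) := by
  intro rdot sdot p q hr0 hs0 hLp hLq
  have key : ∀ (a b : M → ℝ),
      ∫ x, a x * (-(dvg (fun y => ρ y • Ainv (fun z => ρ z • grad b z) y) x)) ∂μ
        = ∫ x, ⟪Ainv (fun z => ρ z • grad b z) x, ρ x • grad a x⟫ ∂μ := by
    intro a b
    have h1 : (∫ x, a x * (-(dvg (fun y => ρ y • Ainv (fun z => ρ z • grad b z) y) x)) ∂μ)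
        = -∫ x, a x * dvg (fun y => ρ y • Ainv (fun z => ρ z • grad b z) y) x ∂μ := by
      rw [← integral_neg]; congr 1; funext x; ring
    rw [h1, hIBP, neg_neg]
    congr 1; funext x
    rw [real_inner_smul_left, real_inner_smul_right]
  have e1 : (∫ x, p x * sdot x ∂μ)
      = ∫ x, ⟪Ainv (fun z => ρ z • grad q z) x, ρ x • grad p x⟫ ∂μ := by
    rw [← key p q]; congr 1; funext x; rw [hLq x]
  have e2 : (∫ x, q x * rdot x ∂μ)
      = ∫ x, ⟪Ainv (fun z => ρ z • grad p z) x, ρ x • grad q x⟫ ∂μ := by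
    rw [← key q p]; congr 1; funext x; rw [hLp x]
  have e3 : (∫ x, p x * rdot x ∂μ)
      = ∫ x, ⟪Ainv (fun z => ρ z • grad p z) x, ρ x • grad p x⟫ ∂μ := by
    rw [← key p p]; congr 1; funext x; rw [hLp x]
  refine ⟨?_, ?_, e3⟩
  · rw [e1, e2]
    calc ∫ x, ⟪Ainv (fun z => ρ z • grad q z) x, ρ x • grad p x⟫ ∂μ
        = ∫ x, ⟪(fun z => ρ z • grad q z) x, Ainv (fun z => ρ z • grad p z) x⟫ ∂μ :=
          hAinv_selfadjoint _ _
      _ = ∫ x, ⟪Ainv (fun z => ρ z • grad p z) x, ρ x • grad q x⟫ ∂μ := by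
          congr 1; funext x; exact real_inner_comm _ _
  · rintro ⟨x0, hx0⟩
    have hw0 : ∃ x, (fun z => ρ z • grad p z) x ≠ 0 := by
      by_contra h
      push_neg at h
      have hz : (fun z => ρ z • grad p z) = 0 := funext h
      apply hx0
      rw [← hLp x0, hz]
      have h0 : (fun y : M => ρ y • Ainv (0 : M → E) y) = (0 : M → E) := by
        funext y; rw [map_zero]; simp
      rw [h0, map_zero]
      simp
    rw [e3]
    exact hApos _ hw0
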